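/- Let (I,k,S,W₁,W₂) be an instance of extended backdoor compression in which S already disconnects W₁ from W₂ in the incidence graph B, let Z be a solution, and let Z' = Z ∩ R_B[W₁,S]. Then Z' is a strong backdoor for the sub-instance I' = I[R_B[W₁,S]] into the scattered class, and conversely, for any strong backdoor Z'' of I' of size at most |Z'| containing S, the set (Z \ Z') ∪ Z'' is a solution for the original instance. -/

import Mathlib

structure CSPConstraint (V D : Type) where
  scope : List V
  rel : Set (List D)

namespace CSP

variable {V D : Type}

/-- Restriction of a constraint by a partial assignment `α` (variables assigned by `α`
are removed from the scope, tuples inconsistent with `α` are dropped and the assigned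
coordinates are projected away). -/
def restrictC (C : CSPConstraint V D) (α : V → Option D) : CSPConstraint V D where
  scope := C.scope.filter (fun v => (α v).isNone)
  rel := { t | ∃ s ∈ C.rel, s.length = C.scope.length ∧
      (∀ p ∈ C.scope.zip s, ∀ d, α p.1 = some d → p.2 = d) ∧
      t = ((C.scope.zip s).filter (fun p => (α p.1).isNone)).map Prod.snd }

/-- `α` is a partial assignment defined on exactly the variable set `S`. -/
def OnSet (α : V → Option D) (S : Set V) : Prop := ∀ v, (α v).isSome ↔ v ∈ S

def restrictI (I : Set (CSPConstraint V D)) (α : V → Option D) : Set (CSPConstraint V D) :=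
  (fun C => restrictC C α) '' I

def varsOf (I : Set (CSPConstraint V D)) : Set V := ⋃ C ∈ I, {v | v ∈ C.scope}

/-- A constraint language: a set of (arity, relation) pairs over domain `D`. -/
abbrev Language (D : Type) := Set (ℕ × Set (List D))

def inLang (Γ : Language D) (C : CSPConstraint V D) : Prop :=
  (C.scope.length, C.rel) ∈ Γ

/-- A language is closed under partial assignments. -/
def ClosedLang (Γ : Language D) : Prop :=
  ∀ (C : CSPConstraint ℕ D) (α : ℕ → Option D), inLang Γ C → inLang Γ (restrictC C α)

/-- Two constraints of `I` share a variable outside `X` (edge of the incidence graph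
with the variables of `X` deleted, contracted to constraints). -/
def Linked (I : Set (CSPConstraint V D)) (X : Set V) (C₁ C₂ : CSPConstraint V D) : Prop :=
  C₁ ∈ I ∧ C₂ ∈ I ∧ ∃ v, v ∉ X ∧ v ∈ C₁.scope ∧ v ∈ C₂.scope

/-- Same connected component of the incidence graph of `I` minus the variables `X`. -/
def SameComp (I : Set (CSPConstraint V D)) (X : Set V) :
    CSPConstraint V D → CSPConstraint V D → Prop :=
  Relation.ReflTransGen (Linked I X)

/-- Membership in the scattered class `CSP(Γ₁) ⊎ ⋯ ⊎ CSP(Γ_d)` : every connected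
component of the incidence graph lies entirely in some `CSP(Γ i)`. -/
def Scattered {d : ℕ} (Γ : Fin d → Language D) (I : Set (CSPConstraint V D)) : Prop :=
  ∀ C ∈ I, ∃ i : Fin d, ∀ C' ∈ I, SameComp I ∅ C C' → inLang (Γ i) C'

/-- `B` is a strong backdoor of `I` into the scattered class. -/
def StrongBackdoor {d : ℕ} (Γ : Fin d → Language D) (I : Set (CSPConstraint V D))
    (B : Set V) : Prop :=
  ∀ α : V → Option D, OnSet α B → Scattered Γ (restrictI I α)

/-- A set of at most `d` constraints forbidden with respect to `S`. -/
def Forbidden {d : ℕ} (Γ : Fin d → Language D) (Cs : Set (CSPConstraint V D))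
    (S : Set V) : Prop :=
  Cs.Finite ∧ Cs.ncard ≤ d ∧ ∃ τ : V → Option D, OnSet τ S ∧
    ∀ i : Fin d, ∃ C ∈ Cs, ¬ inLang (Γ i) (restrictC C τ)

def Satisfies (β : V → D) (C : CSPConstraint V D) : Prop := C.scope.map β ∈ C.rel

/-- The incidence graph of an instance: variables on one side, constraints on the other. -/
def incGraph (I : Set (CSPConstraint V D)) : SimpleGraph (V ⊕ CSPConstraint V D) where
  Adj a b := ∃ v C, C ∈ I ∧ v ∈ C.scope ∧
    ((a = Sum.inl v ∧ b = Sum.inr C) ∨ (a = Sum.inr C ∧ b = Sum.inl v))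
  symm := by
    constructor
    rintro a b ⟨v, C, hC, hv, h⟩
    exact ⟨v, C, hC, hv, by tauto⟩
  loopless := by
    constructor
    rintro a ⟨v, C, -, -, (⟨h1, h2⟩ | ⟨h1, h2⟩)⟩ <;> subst h1 <;> simp at h2

/-- Reachability in a graph avoiding the vertex set `T`. -/
def ReachAvoid {W : Type} (G : SimpleGraph W) (T : Set W) (a b : W) : Prop :=
  a ∉ T ∧ b ∉ T ∧ Relation.ReflTransGen (fun x y => G.Adj x y ∧ x ∉ T ∧ y ∉ T) a b

/-- `R(X,T)` : the vertices reachable from `X` after deleting `T`. -/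
def RSet {W : Type} (G : SimpleGraph W) (X T : Set W) : Set W :=
  {v | ∃ x ∈ X, ReachAvoid G T x v}

def IsXYSep {W : Type} (G : SimpleGraph W) (X Y S : Set W) : Prop :=
  Disjoint S (X ∪ Y) ∧ ∀ y ∈ Y, y ∉ RSet G X S

/-- `S₁` covers `S₂` with respect to `X`. -/
def Covers {W : Type} (G : SimpleGraph W) (X S₁ S₂ : Set W) : Prop :=
  RSet G X S₂ ⊂ RSet G X S₁

def Dominates {W : Type} (G : SimpleGraph W) (X S₁ S₂ : Set W) : Prop :=
  S₁.ncard ≤ S₂.ncard ∧ Covers G X S₁ S₂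

def MinimalSep {W : Type} (G : SimpleGraph W) (X Y S : Set W) : Prop :=
  IsXYSep G X Y S ∧ ∀ S' ⊂ S, ¬ IsXYSep G X Y S'

def ImportantSep {W : Type} (G : SimpleGraph W) (X Y S : Set W) : Prop :=
  MinimalSep G X Y S ∧ ¬ ∃ S', IsXYSep G X Y S' ∧ S' ≠ S ∧ Dominates G X S' S

/-- `X` is a `W₁`–`W₂` separator (of variables) in `B_S`, the incidence graph with the
variables of `S` deleted. -/
def SepIn (I : Set (CSPConstraint V D)) (S W₁ W₂ X : Set V) : Prop :=
  Disjoint X (S ∪ W₁ ∪ W₂) ∧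
  ∀ w₁ ∈ W₁, ∀ w₂ ∈ W₂,
    ¬ ReachAvoid (incGraph I) (Sum.inl '' (S ∪ X)) (Sum.inl w₁) (Sum.inl w₂)

/-- `R_{B_S}(W₁,X)` : vertices of the incidence graph reachable from `W₁` in `B_S − X`. -/
def Region (I : Set (CSPConstraint V D)) (S W₁ X : Set V) : Set (V ⊕ CSPConstraint V D) :=
  RSet (incGraph I) (Sum.inl '' W₁) (Sum.inl '' (S ∪ X))

/-- The sub-instance `I[R_{B_S}[W₁,X] ∪ S]`. -/
def SubInst (I : Set (CSPConstraint V D)) (S W₁ X : Set V) : Set (CSPConstraint V D) :=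
  {C | C ∈ I ∧ ∀ v ∈ C.scope, v ∈ S ∨ v ∈ X ∨ Sum.inl v ∈ Region I S W₁ X}

/-- The separator `X` in `B_S` is `ℓ`-good. -/
def Good {d : ℕ} (Γ : Fin d → Language D) (I : Set (CSPConstraint V D))
    (S W₁ X : Set V) (ℓ : ℕ) : Prop :=
  ∃ K : Set V, K.Finite ∧ K.ncard ≤ ℓ ∧ StrongBackdoor Γ (SubInst I S W₁ X) (K ∪ X ∪ S)

/-- A solution of the extended backdoor compression instance `(I,k,S,W)` : a strong
backdoor of size at most `k` containing `S` and disjoint from `W`. -/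
def Solution {d : ℕ} (Γ : Fin d → Language D) (I : Set (CSPConstraint V D))
    (k : ℕ) (S W Z : Set V) : Prop :=
  S ⊆ Z ∧ Disjoint Z W ∧ Z.Finite ∧ Z.ncard ≤ k ∧ StrongBackdoor Γ I Z

end CSP

namespace CSPAux
open CSP
variable {V D : Type}

lemma constraint_ext {C₁ C₂ : CSPConstraint V D} (h1 : C₁.scope = C₂.scope)
    (h2 : C₁.rel = C₂.rel) : C₁ = C₂ := by
  cases C₁; cases C₂; cases h1; cases h2; rfl

lemma mem_restrict_scope {C : CSPConstraint V D} {α : V → Option D} {v : V} :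
    v ∈ (restrictC C α).scope ↔ v ∈ C.scope ∧ (α v).isNone := by
  simp [restrictC, List.mem_filter]

lemma restrictC_congr (C : CSPConstraint V D) {α α' : V → Option D}
    (h : ∀ v ∈ C.scope, α v = α' v) : restrictC C α = restrictC C α' := by
  have hrel : ∀ (β β' : V → Option D), (∀ v ∈ C.scope, β v = β' v) →
      (restrictC C β).rel ⊆ (restrictC C β').rel := by
    intro β β' hb t ht
    obtain ⟨s, hs, hlen, hc, rfl⟩ := ht
    refine ⟨s, hs, hlen, ?_, ?_⟩
    · intro p hp d hd
      exact hc p hp d (by rw [hb p.1 (List.of_mem_zip hp).1]; exact hd)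
    · refine congrArg _ (List.filter_congr ?_)
      intro q hq
      rw [hb q.1 (List.of_mem_zip hq).1]
  have h2 : (restrictC C α).rel = (restrictC C α').rel :=
    Set.Subset.antisymm (hrel α α' h) (hrel α' α (fun v hv => (h v hv).symm))
  have h1 : (restrictC C α).scope = (restrictC C α').scope :=
    List.filter_congr (fun v hv => by rw [h v hv])
  exact constraint_ext h1 h2

lemma zf_len {E : Type} (p : V → Bool) :
    ∀ (l : List V) (s : List E), l.length = s.length →
      ((l.zip s).filter (fun q => p q.1)).length = (l.filter p).length
  | [], [], _ => rfl
  | [], _ :: _, h => by simp at h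
  | _ :: _, [], h => by simp at h
  | a :: l, b :: s, h => by
    have ih := zf_len p l s (by simpa using h)
    by_cases hp : p a <;> simp [List.filter_cons, hp, ih]

lemma zf_zip {E : Type} (p : V → Bool) :
    ∀ (l : List V) (s : List E), l.length = s.length →
      (l.filter p).zip (((l.zip s).filter (fun q => p q.1)).map Prod.snd)
        = (l.zip s).filter (fun q => p q.1)
  | [], [], _ => rfl
  | [], _ :: _, h => by simp at h
  | _ :: _, [], h => by simp at h
  | a :: l, b :: s, h => by
    have ih := zf_zip p l s (by simpa using h)
    by_cases hp : p a <;> simp [List.filter_cons, hp, ih]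

def comb (α β : V → Option D) : V → Option D := fun v =>
  match α v with | some d => some d | none => β v

lemma comb_isNone (α β : V → Option D) (v : V) :
    (comb α β v).isNone = ((α v).isNone && (β v).isNone) := by
  unfold comb; cases α v <;> simp

lemma comb_some_left {α β : V → Option D} {v : V} {d : D} (h : α v = some d) :
    comb α β v = some d := by unfold comb; rw [h]

lemma comb_none_left {α β : V → Option D} {v : V} (h : α v = none) :
    comb α β v = β v := by unfold comb; rw [h]

lemma restrict_comp (C : CSPConstraint V D) (α β : V → Option D) :
    restrictC (restrictC C α) β = restrictC C (comb α β) := by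
  refine constraint_ext ?_ ?_
  · show (C.scope.filter _).filter _ = C.scope.filter _
    rw [List.filter_filter]
    refine List.filter_congr fun v _ => ?_
    rw [comb_isNone, Bool.and_comm]
  · ext t
    show (∃ s' ∈ (restrictC C α).rel, _) ↔ _
    constructor
    · rintro ⟨s', ⟨s, hs, hlen, hc, rfl⟩, hlen', hc', rfl⟩
      have hzip : (restrictC C α).scope.zip
            (((C.scope.zip s).filter (fun p => (α p.1).isNone)).map Prod.snd)
          = (C.scope.zip s).filter (fun p => (α p.1).isNone) :=
        zf_zip (fun v => (α v).isNone) C.scope s hlen.symm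
      refine ⟨s, hs, hlen, ?_, ?_⟩
      · intro p hp d hd
        cases hav : α p.1 with
        | some e =>
          have he : comb α β p.1 = some e := comb_some_left hav
          rw [he] at hd
          injection hd with h
          rw [← h]
          exact hc p hp e hav
        | none =>
          refine hc' p ?_ d (by rw [← comb_none_left (β := β) hav]; exact hd)
          rw [hzip]
          exact List.mem_filter.mpr ⟨hp, by simp [hav]⟩
      · rw [hzip, List.filter_filter]
        refine congrArg _ (List.filter_congr ?_)
        intro q _
        rw [comb_isNone, Bool.and_comm]
    · rintro ⟨s, hs, hlen, hc, rfl⟩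
      have hzip : (restrictC C α).scope.zip
            (((C.scope.zip s).filter (fun p => (α p.1).isNone)).map Prod.snd)
          = (C.scope.zip s).filter (fun p => (α p.1).isNone) :=
        zf_zip (fun v => (α v).isNone) C.scope s hlen.symm
      have hzlen : ((C.scope.zip s).filter (fun p => (α p.1).isNone)).length
          = (restrictC C α).scope.length :=
        zf_len (fun v => (α v).isNone) C.scope s hlen.symm
      refine ⟨((C.scope.zip s).filter (fun p => (α p.1).isNone)).map Prod.snd,
        ⟨s, hs, hlen, ?_, rfl⟩, by rw [List.length_map, hzlen], ?_, ?_⟩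
      · intro p hp d hd
        exact hc p hp d (comb_some_left hd)
      · intro p hp d hd
        rw [hzip] at hp
        have hmem := List.mem_filter.mp hp
        have hnone : α p.1 = none := Option.isNone_iff_eq_none.mp (by simpa using hmem.2)
        exact hc p hmem.1 d (by rw [comb_none_left hnone]; exact hd)
      · rw [hzip, List.filter_filter]
        refine (congrArg _ (List.filter_congr ?_)).symm
        intro q _
        rw [comb_isNone, Bool.and_comm]

lemma restrictI_comp (I : Set (CSPConstraint V D)) (α β : V → Option D) :
    restrictI (restrictI I α) β = restrictI I (comb α β) := by
  unfold restrictI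
  rw [Set.image_image]
  exact Set.image_congr fun C _ => restrict_comp C α β

lemma f2r (α : V → Option D) :
    ∀ l : List V, List.Forall₂ (fun v n => α v = (l[n]?).bind α) l (List.range l.length)
  | [] => List.Forall₂.nil
  | a :: l => by
    rw [List.length_cons, List.range_succ_eq_map]
    refine List.Forall₂.cons (by simp) ?_
    rw [List.forall₂_map_right_iff]
    refine (f2r α l).imp ?_
    intro v n h
    simpa using h

lemma reindex_filter_len {α : V → Option D} {α' : ℕ → Option D} :
    ∀ {l : List V} {l' : List ℕ}, List.Forall₂ (fun v n => α v = α' n) l l' →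
      (l.filter fun v => (α v).isNone).length = (l'.filter fun n => (α' n).isNone).length := by
  intro l l' h
  induction h with
  | nil => rfl
  | @cons a b l l' hr _ ih =>
    simp only [List.filter_cons, ← hr]
    cases (α a).isNone <;> simp [ih]

lemma reindex_conds {α : V → Option D} {α' : ℕ → Option D}
    {l : List V} {l' : List ℕ} (h : List.Forall₂ (fun v n => α v = α' n) l l') :
    ∀ s : List D, ((∀ p ∈ l.zip s, ∀ d, α p.1 = some d → p.2 = d) ↔
      (∀ p ∈ l'.zip s, ∀ d, α' p.1 = some d → p.2 = d)) := by
  induction h with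
  | nil => intro s; simp
  | @cons a b l l' hr _ ih =>
    intro s
    rcases s with _ | ⟨x, s⟩
    · simp
    · simp only [List.zip_cons_cons, List.mem_cons, forall_eq_or_imp]
      rw [ih s, hr]

lemma reindex_map {α : V → Option D} {α' : ℕ → Option D}
    {l : List V} {l' : List ℕ} (h : List.Forall₂ (fun v n => α v = α' n) l l') :
    ∀ s : List D, ((l.zip s).filter (fun p => (α p.1).isNone)).map Prod.snd
      = ((l'.zip s).filter (fun p => (α' p.1).isNone)).map Prod.snd := by
  induction h with
  | nil => intro s; simp
  | @cons a b l l' hr _ ih =>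
    intro s
    rcases s with _ | ⟨x, s⟩
    · simp
    · simp only [List.zip_cons_cons, List.filter_cons, ← hr]
      cases (α a).isNone <;> simp [ih s]

lemma inLang_restrictC {Γ : CSP.Language D} (hΓ : ClosedLang Γ) (C : CSPConstraint V D)
    (α : V → Option D) (h : inLang Γ C) : inLang Γ (restrictC C α) := by
  set l := C.scope with hl
  have hf : List.Forall₂ (fun v n => α v = (fun n => (l[n]?).bind α) n) l (List.range l.length) :=
    f2r α l
  have h2 : inLang Γ (⟨List.range l.length, C.rel⟩ : CSPConstraint ℕ D) := by
    unfold inLang at h ⊢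
    simpa using h
  have h3 := hΓ _ (fun n => (l[n]?).bind α) h2
  have hlen : (restrictC C α).scope.length
      = (restrictC (⟨List.range l.length, C.rel⟩ : CSPConstraint ℕ D)
          (fun n => (l[n]?).bind α)).scope.length :=
    reindex_filter_len hf
  have hrel : (restrictC C α).rel
      = (restrictC (⟨List.range l.length, C.rel⟩ : CSPConstraint ℕ D)
          (fun n => (l[n]?).bind α)).rel := by
    ext t
    show (∃ s ∈ C.rel, s.length = C.scope.length ∧ _) ↔ (∃ s ∈ C.rel, _)
    constructor
    · rintro ⟨s, hs, hlen', hc, rfl⟩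
      exact ⟨s, hs, by simpa [← hl] using hlen', (reindex_conds hf s).mp hc, reindex_map hf s⟩
    · rintro ⟨s, hs, hlen', hc, rfl⟩
      exact ⟨s, hs, by simpa [← hl] using hlen', (reindex_conds hf s).mpr hc,
        (reindex_map hf s).symm ▸ rfl⟩
  unfold inLang at h3 ⊢
  rw [hlen, hrel]
  exact h3

lemma scattered_restrict {d : ℕ} {Γ : Fin d → CSP.Language D} (hclosed : ∀ i, ClosedLang (Γ i))
    {J : Set (CSPConstraint V D)} (h : Scattered Γ J) (β : V → Option D) :
    Scattered Γ (restrictI J β) := by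
  rintro C ⟨E, hE, rfl⟩
  obtain ⟨i, hi⟩ := h E hE
  refine ⟨i, fun C' hC' hcomp => ?_⟩
  clear hC'
  suffices hs : ∃ E' ∈ J, C' = restrictC E' β ∧ SameComp J ∅ E E' by
    obtain ⟨E', hE', rfl, hsc⟩ := hs
    exact inLang_restrictC (hclosed i) _ β (hi E' hE' hsc)
  induction hcomp with
  | refl => exact ⟨E, hE, rfl, Relation.ReflTransGen.refl⟩
  | tail hab hlink ih =>
    obtain ⟨E₁, hE₁, rfl, hsc₁⟩ := ih
    obtain ⟨hm1, hm2, u, -, hu1, hu2⟩ := hlink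
    obtain ⟨E₂, hE₂, rfl⟩ := hm2
    exact ⟨E₂, hE₂, rfl, hsc₁.tail ⟨hE₁, hE₂, u, by simp,
      (mem_restrict_scope.mp hu1).1, (mem_restrict_scope.mp hu2).1⟩⟩

lemma transfer {d : ℕ} {Γ : Fin d → CSP.Language D} {K : Set (CSPConstraint V D)}
    (hK : Scattered Γ K) (I₀ : Set (CSPConstraint V D)) (α : V → Option D)
    (P : CSPConstraint V D → Prop)
    (heq : ∀ D' ∈ I₀, P D' → restrictC D' α ∈ K)
    (hstep : ∀ D₁, D₁ ∈ I₀ → P D₁ → ∀ D₂ ∈ I₀,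
      Linked (restrictI I₀ α) ∅ (restrictC D₁ α) (restrictC D₂ α) →
      P D₂ ∧ Linked K ∅ (restrictC D₁ α) (restrictC D₂ α))
    {D₀ : CSPConstraint V D} (hD₀ : D₀ ∈ I₀) (hP : P D₀) :
    ∃ i, ∀ C' ∈ restrictI I₀ α, SameComp (restrictI I₀ α) ∅ (restrictC D₀ α) C' →
      inLang (Γ i) C' := by
  obtain ⟨i, hi⟩ := hK _ (heq D₀ hD₀ hP)
  refine ⟨i, fun C' hC' hcomp => ?_⟩
  clear hC'
  suffices hs : (∃ D' ∈ I₀, P D' ∧ C' = restrictC D' α) ∧ SameComp K ∅ (restrictC D₀ α) C' by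
    obtain ⟨⟨D', hD', hPD', rfl⟩, hsc⟩ := hs
    exact hi _ (heq D' hD' hPD') hsc
  induction hcomp with
  | refl => exact ⟨⟨D₀, hD₀, hP, rfl⟩, Relation.ReflTransGen.refl⟩
  | tail hab hlink ih =>
    obtain ⟨⟨D₁, hD₁, hP₁, rfl⟩, hsc⟩ := ih
    obtain ⟨hm1, hm2, hv⟩ := hlink
    obtain ⟨D₂, hD₂, rfl⟩ := hm2
    obtain ⟨hP₂, hlK⟩ := hstep D₁ hD₁ hP₁ D₂ hD₂ ⟨hm1, ⟨D₂, hD₂, rfl⟩, hv⟩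
    exact ⟨⟨D₂, hD₂, hP₂, rfl⟩, hsc.tail hlK⟩


end CSPAux

/-- The variables in the component(s) of `W₁` in the incidence graph minus `S`. -/
def VReg {V D : Type} (I : Set (CSPConstraint V D)) (S W₁ : Set V) : Set V :=
  {v | ∃ w ∈ W₁, CSP.ReachAvoid (CSP.incGraph I) (Sum.inl '' S) (Sum.inl w) (Sum.inl v)}

open CSPAux in
lemma inl_mem_region_iff {V D : Type} (I : Set (CSPConstraint V D)) (S W₁ : Set V) (v : V) :
    Sum.inl v ∈ CSP.Region I S W₁ ∅ ↔ v ∈ VReg I S W₁ := by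
  constructor
  · rintro ⟨x, ⟨w, hw, rfl⟩, hr⟩
    rw [Set.union_empty] at hr
    exact ⟨w, hw, hr⟩
  · rintro ⟨w, hw, hr⟩
    exact ⟨Sum.inl w, ⟨w, hw, rfl⟩, by rw [Set.union_empty]; exact hr⟩

lemma mem_subinst_iff {V D : Type} {I : Set (CSPConstraint V D)} {S W₁ : Set V}
    {C : CSPConstraint V D} :
    C ∈ CSP.SubInst I S W₁ ∅ ↔ C ∈ I ∧ ∀ v ∈ C.scope, v ∈ S ∨ v ∈ VReg I S W₁ := by
  unfold CSP.SubInst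
  simp only [Set.mem_setOf_eq, Set.mem_empty_iff_false, false_or, inl_mem_region_iff]

lemma scope_vreg_subinst {V D : Type} {I : Set (CSPConstraint V D)} {S W₁ : Set V}
    {C : CSPConstraint V D} {u : V}
    (hC : C ∈ I) (hu : u ∈ C.scope) (huV : u ∈ VReg I S W₁) : C ∈ CSP.SubInst I S W₁ ∅ := by
  refine mem_subinst_iff.mpr ⟨hC, fun w hw => ?_⟩
  by_cases hwS : w ∈ S
  · exact Or.inl hwS
  · right
    obtain ⟨w₀, hw₀, h1, h2, hchain⟩ := huV
    have hCnot : (Sum.inr C : V ⊕ CSPConstraint V D) ∉ Sum.inl '' S := by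
      rintro ⟨s, -, hs⟩; exact Sum.inl_ne_inr hs
    have hwnot : (Sum.inl w : V ⊕ CSPConstraint V D) ∉ Sum.inl '' S := by
      rintro ⟨s, hsS, hs⟩; exact hwS (Sum.inl_injective hs ▸ hsS)
    refine ⟨w₀, hw₀, h1, hwnot, ?_⟩
    exact (hchain.tail ⟨⟨u, C, hC, hu, Or.inl ⟨rfl, rfl⟩⟩, h2, hCnot⟩).tail
      ⟨⟨w, C, hC, hw, Or.inr ⟨rfl, rfl⟩⟩, hCnot, hwnot⟩

/-- if `S` already disconnects `W₁` from `W₂`, then `Z' = Z ∩ R_B[W₁,S]`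
is a strong backdoor of the sub-instance `I[R_B[W₁,S]]`, and conversely replacing `Z'`
by any strong backdoor `Z''` of the sub-instance of size at most `|Z'|` containing `S`
yields a solution of the original instance. -/
theorem stmt16 {V D : Type} [Nonempty D] {d k : ℕ} (Γ : Fin d → CSP.Language D)
    (hfin : ∀ i, (Γ i).Finite) (hclosed : ∀ i, CSP.ClosedLang (Γ i))
    (hD2 : ∀ i, (2, {t : List D | t.length = 2}) ∈ Γ i)
    (I : Set (CSPConstraint V D)) (S W₁ W₂ Z : Set V)
    (hSsep : ∀ w₁ ∈ W₁, ∀ w₂ ∈ W₂,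
      ¬ CSP.ReachAvoid (CSP.incGraph I) (Sum.inl '' S) (Sum.inl w₁) (Sum.inl w₂))
    (hsol : CSP.Solution Γ I k S (W₁ ∪ W₂) Z) :
    CSP.StrongBackdoor Γ (CSP.SubInst I S W₁ ∅) (Z ∩ (VReg I S W₁ ∪ S)) ∧
    ∀ Z'' : Set V, S ⊆ Z'' → Z''.Finite → Disjoint Z'' (W₁ ∪ W₂) →
      Z''.ncard ≤ (Z ∩ (VReg I S W₁ ∪ S)).ncard →
      CSP.StrongBackdoor Γ (CSP.SubInst I S W₁ ∅) Z'' →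
      CSP.Solution Γ I k S (W₁ ∪ W₂) ((Z \ (Z ∩ (VReg I S W₁ ∪ S))) ∪ Z'') := by
  classical
  obtain ⟨d₀⟩ := ‹Nonempty D›
  obtain ⟨hSZ, hdisj, hZfin, hZk, hZbd⟩ := hsol
  set Z' : Set V := Z ∩ (VReg I S W₁ ∪ S) with hZ'def
  have hZ'sub : Z' ⊆ Z := Set.inter_subset_left
  constructor
  · -- part 1
    intro α hα
    set αh : V → Option D := fun v => if v ∈ Z \ Z' then some d₀ else α v with hahd
    have hah : CSP.OnSet αh Z := by
      intro v
      by_cases h : v ∈ Z \ Z'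
      · simp [hahd, h.1, h.2]
      · simp only [hahd, if_neg h]
        rw [hα v]
        constructor
        · exact fun hv => hZ'sub hv
        · intro hv
          by_contra hvz
          exact h ⟨hv, hvz⟩
    have hagree : ∀ C ∈ CSP.SubInst I S W₁ ∅, ∀ v ∈ C.scope, α v = αh v := by
      intro C hC v hv
      have hor := (mem_subinst_iff.mp hC).2 v hv
      have hnot : v ∉ Z \ Z' := by
        rintro ⟨hvZ, hvZ'⟩
        exact hvZ' ⟨hvZ, hor.symm⟩
      simp only [hahd]
      rw [if_neg hnot]
    intro C hC
    obtain ⟨D₀, hD₀, rfl⟩ := hC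
    refine CSPAux.transfer (hZbd αh hah) (CSP.SubInst I S W₁ ∅) α (fun _ => True) ?_ ?_ hD₀ trivial
    · rintro D' hD' -
      exact ⟨D', (mem_subinst_iff.mp hD').1, (CSPAux.restrictC_congr D' (hagree D' hD')).symm⟩
    · rintro D₁ hD₁ - D₂ hD₂ hlink
      obtain ⟨-, -, u, -, hu1, hu2⟩ := hlink
      exact ⟨trivial, ⟨D₁, (mem_subinst_iff.mp hD₁).1, (CSPAux.restrictC_congr D₁ (hagree D₁ hD₁)).symm⟩,
        ⟨D₂, (mem_subinst_iff.mp hD₂).1, (CSPAux.restrictC_congr D₂ (hagree D₂ hD₂)).symm⟩,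
        u, by simp, hu1, hu2⟩
  · -- part 2
    intro Z'' hSZ'' hZ''fin hZ''disj hZ''card hZ''bd
    refine ⟨fun v hv => Or.inr (hSZ'' hv), ?_, (hZfin.diff (t := Z')).union hZ''fin, ?_, ?_⟩
    · exact Set.disjoint_union_left.mpr
        ⟨Set.disjoint_of_subset_left Set.diff_subset hdisj, hZ''disj⟩
    · calc ((Z \ Z') ∪ Z'').ncard ≤ (Z \ Z').ncard + Z''.ncard :=
            Set.ncard_union_le _ _
        _ ≤ (Z \ Z').ncard + Z'.ncard := Nat.add_le_add_left hZ''card _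
        _ = Z.ncard := Set.ncard_diff_add_ncard_of_subset hZ'sub hZfin
        _ ≤ k := hZk
    · intro α hα
      set ZN : Set V := (Z \ Z') ∪ Z'' with hZNdef
      have hSome : ∀ v ∈ ZN, (α v).isSome := fun v hv => (hα v).mpr hv
      have hNone : ∀ v, v ∉ ZN → α v = none := by
        intro v hv
        by_contra h
        exact hv ((hα v).mp (Option.ne_none_iff_isSome.mp h))
      have hSN : S ⊆ ZN := fun v hv => Or.inr (hSZ'' hv)
      have hnotS : ∀ {C : CSPConstraint V D} {u : V},
          u ∈ (CSP.restrictC C α).scope → u ∉ S := by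
        intro C u hu hS
        have h1 := (CSPAux.mem_restrict_scope.mp hu).2
        rw [Option.isNone_iff_eq_none] at h1
        have h2 := hSome u (hSN hS)
        rw [h1] at h2
        simp at h2
      set αB : V → Option D := fun v => if v ∈ Z'' then some ((α v).getD d₀) else none
        with hαBdef
      have hαB : CSP.OnSet αB Z'' := by
        intro v; by_cases h : v ∈ Z'' <;> simp [hαBdef, h]
      have hagreeB : ∀ C ∈ CSP.SubInst I S W₁ ∅, ∀ v ∈ C.scope, α v = αB v := by
        intro C hC v hv
        have key : ∀ hvZ'' : v ∈ Z'', α v = αB v := by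
          intro hvZ''
          obtain ⟨dv, hdv⟩ := Option.isSome_iff_exists.mp (hSome v (Or.inr hvZ''))
          simp [hαBdef, hvZ'', hdv]
        rcases (mem_subinst_iff.mp hC).2 v hv with hvS | hvV
        · exact key (hSZ'' hvS)
        · by_cases hvZ'' : v ∈ Z''
          · exact key hvZ''
          · have hvN : v ∉ ZN := by
              rintro (⟨hvZ, hvZ'⟩ | h)
              · exact hvZ' ⟨hvZ, Or.inl hvV⟩
              · exact hvZ'' h
            simp [hαBdef, hvZ'', hNone v hvN]
      set αZ : V → Option D := fun v =>
        if v ∈ Z then (if v ∈ ZN then α v else some d₀) else none with hαZdef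
      have hαZ : CSP.OnSet αZ Z := by
        intro v
        by_cases h : v ∈ Z
        · by_cases h2 : v ∈ ZN
          · simp only [hαZdef, if_pos h, if_pos h2]
            exact iff_of_true (hSome v h2) h
          · simp [hαZdef, h, h2]
        · simp [hαZdef, h]
      set β : V → Option D := fun v => if v ∈ Z'' ∧ v ∉ Z then α v else none with hβdef
      have hγ : ∀ v, v ∉ Z \ ZN → CSPAux.comb αZ β v = α v := by
        intro v hv
        by_cases hZv : v ∈ Z
        · have hZN : v ∈ ZN := by
            by_contra h; exact hv ⟨hZv, h⟩
          have he : αZ v = α v := by simp [hαZdef, hZv, hZN]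
          obtain ⟨dv, hdv⟩ := Option.isSome_iff_exists.mp (hSome v hZN)
          rw [CSPAux.comb_some_left (show αZ v = some dv by rw [he, hdv]), hdv]
        · have hαZv : αZ v = none := by simp [hαZdef, hZv]
          rw [CSPAux.comb_none_left hαZv]
          by_cases hZ'' : v ∈ Z''
          · simp [hβdef, hZ'', hZv]
          · have hvN : v ∉ ZN := by
              rintro (⟨h, -⟩ | h)
              · exact hZv h
              · exact hZ'' h
            simp [hβdef, hZ'', hNone v hvN]
      have hdiffV : ∀ v, v ∈ Z → v ∉ ZN → v ∈ VReg I S W₁ := by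
        intro v hvZ hvN
        have hvZ' : v ∈ Z' := by
          by_contra h
          exact hvN (Or.inl ⟨hvZ, h⟩)
        rcases hvZ'.2 with h | h
        · exact h
        · exact absurd (Or.inr (hSZ'' h)) hvN
      have hK2 : CSP.Scattered Γ (CSP.restrictI I (CSPAux.comb αZ β)) := by
        rw [← CSPAux.restrictI_comp]
        exact CSPAux.scattered_restrict hclosed (hZbd αZ hαZ) β
      have hagree2 : ∀ C ∈ I, C ∉ CSP.SubInst I S W₁ ∅ →
          ∀ v ∈ C.scope, α v = CSPAux.comb αZ β v := by
        intro C hC hCn v hv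
        refine (hγ v ?_).symm
        rintro ⟨hvZ, hvN⟩
        exact hCn (scope_vreg_subinst hC hv (hdiffV v hvZ hvN))
      intro C hC
      obtain ⟨D₀, hD₀, rfl⟩ := hC
      by_cases hc : D₀ ∈ CSP.SubInst I S W₁ ∅
      · refine CSPAux.transfer (hZ''bd αB hαB) I α
          (fun E => E ∈ CSP.SubInst I S W₁ ∅) ?_ ?_ hD₀ hc
        · rintro D' - hD'
          exact ⟨D', hD', (CSPAux.restrictC_congr D' (hagreeB D' hD')).symm⟩
        · rintro D₁ - hP₁ D₂ hD₂ hlink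
          obtain ⟨-, -, u, -, hu1, hu2⟩ := hlink
          have huV : u ∈ VReg I S W₁ := by
            rcases (mem_subinst_iff.mp hP₁).2 u (CSPAux.mem_restrict_scope.mp hu1).1 with h | h
            · exact absurd h (hnotS hu1)
            · exact h
          have hP₂ : D₂ ∈ CSP.SubInst I S W₁ ∅ :=
            scope_vreg_subinst hD₂ (CSPAux.mem_restrict_scope.mp hu2).1 huV
          exact ⟨hP₂, ⟨D₁, hP₁, (CSPAux.restrictC_congr D₁ (hagreeB D₁ hP₁)).symm⟩,
            ⟨D₂, hP₂, (CSPAux.restrictC_congr D₂ (hagreeB D₂ hP₂)).symm⟩, u, by simp, hu1, hu2⟩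
      · refine CSPAux.transfer hK2 I α
          (fun E => E ∈ I ∧ E ∉ CSP.SubInst I S W₁ ∅) ?_ ?_ hD₀ ⟨hD₀, hc⟩
        · rintro D' - ⟨hD', hDn⟩
          exact ⟨D', hD', (CSPAux.restrictC_congr D' (hagree2 D' hD' hDn)).symm⟩
        · rintro D₁ - ⟨hD₁', hD₁n⟩ D₂ hD₂ hlink
          obtain ⟨-, -, u, -, hu1, hu2⟩ := hlink
          have huNV : u ∉ VReg I S W₁ := fun h =>
            hD₁n (scope_vreg_subinst hD₁' (CSPAux.mem_restrict_scope.mp hu1).1 h)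
          have hD₂n : D₂ ∉ CSP.SubInst I S W₁ ∅ := by
            intro h
            rcases (mem_subinst_iff.mp h).2 u (CSPAux.mem_restrict_scope.mp hu2).1 with hS | hV
            · exact hnotS hu2 hS
            · exact huNV hV
          exact ⟨⟨hD₂, hD₂n⟩,
            ⟨D₁, hD₁', (CSPAux.restrictC_congr D₁ (hagree2 D₁ hD₁' hD₁n)).symm⟩,
            ⟨D₂, hD₂, (CSPAux.restrictC_congr D₂ (hagree2 D₂ hD₂ hD₂n)).symm⟩,
            u, by simp, hu1, hu2⟩
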